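/- arXiv:2509.01143 — 3 statements merged into one kernel-verified Lean document; each statement's English description precedes it below -/
import Mathlib

section
/- Let P = m_t + √λ(a_s† + a_s) + λ k_s on the one-mode s-weighted free Fock space, and let the polynomials C_n be defined by C_0(x) = 1, C_1(x) = x − λ, and C_{n+1}(x) = (x − (λ s^n + t^{n−1})) C_n(x) − λ s^{n−1} C_{n−1}(x) for n ≥ 1. Then C_n(P) Ω = λ^{n/2} ξ^{⊗n} for all n ≥ 0. -/
/-- The basis vector `ξ^{⊗ m}` of the one-mode Fock space, modeled as `ℕ →₀ ℝ`. -/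
noncomputable def e (m : ℕ) : ℕ →₀ ℝ := Finsupp.single m 1

theorem stmt4 (lam s t : ℝ) (hlam : 0 < lam)
    (hs : 0 < s) (hs1 : s ≤ 1) (ht : 0 < t) (ht1 : t ≤ 1)
    (a adag k mt : Module.End ℝ (ℕ →₀ ℝ))
    (ha0 : a (e 0) = 0)
    (ha : ∀ m : ℕ, 1 ≤ m → a (e m) = s ^ (m - 1) • e (m - 1))
    (hadag : ∀ m : ℕ, adag (e m) = e (m + 1))
    (hk : ∀ m : ℕ, k (e m) = s ^ m • e m)
    (hmt0 : mt (e 0) = 0)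
    (hmt : ∀ m : ℕ, 1 ≤ m → mt (e m) = t ^ (m - 1) • e m)
    (C : ℕ → Polynomial ℝ)
    (hC0 : C 0 = 1)
    (hC1 : C 1 = Polynomial.X - Polynomial.C lam)
    (hCrec : ∀ n : ℕ, 1 ≤ n →
      C (n + 1) = (Polynomial.X - Polynomial.C (lam * s ^ n + t ^ (n - 1))) * C n
        - Polynomial.C (lam * s ^ (n - 1)) * C (n - 1)) :
    ∀ n : ℕ,
      (Polynomial.aeval (mt + Real.sqrt lam • (adag + a) + lam • k) (C n)) (e 0)
        = Real.sqrt (lam ^ n) • e n := by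
  set r := Real.sqrt lam with hr
  have hr2 : r ^ 2 = lam := Real.sq_sqrt hlam.le
  have hsq : ∀ m : ℕ, Real.sqrt (lam ^ m) = r ^ m := by
    intro m
    induction m with
    | zero => simp
    | succ m ih =>
      rw [pow_succ, Real.sqrt_mul (pow_nonneg hlam.le m), ih, pow_succ, hr]
  set P := mt + r • (adag + a) + lam • k with hP
  have hP0 : P (e 0) = r • e 1 + lam • e 0 := by
    simp only [hP, LinearMap.add_apply, LinearMap.smul_apply, hmt0, hadag 0, ha0, hk 0]
    rw [pow_zero, one_smul]
    abel
  have hPn : ∀ m : ℕ, P (e (m + 1)) = r • e (m + 2)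
      + (lam * s ^ (m + 1) + t ^ m) • e (m + 1) + (r * s ^ m) • e m := by
    intro m
    simp only [hP, LinearMap.add_apply, LinearMap.smul_apply, hmt (m + 1) (by omega),
      hadag (m + 1), ha (m + 1) (by omega), hk (m + 1), Nat.add_sub_cancel]
    rw [smul_add, smul_smul, smul_smul, add_smul]
    abel
  suffices H : ∀ n : ℕ, (Polynomial.aeval P (C n)) (e 0) = r ^ n • e n ∧
      (Polynomial.aeval P (C (n + 1))) (e 0) = r ^ (n + 1) • e (n + 1) by
    intro n; rw [hsq]; exact (H n).1
  have h0 : (Polynomial.aeval P (C 0)) (e 0) = r ^ 0 • e 0 := by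
    simp [hC0]
  have h1 : (Polynomial.aeval P (C 1)) (e 0) = r ^ 1 • e 1 := by
    rw [hC1, map_sub, Polynomial.aeval_X, Polynomial.aeval_C, LinearMap.sub_apply,
      Module.algebraMap_end_apply, hP0, pow_one]
    abel
  intro n
  induction n with
  | zero => exact ⟨h0, h1⟩
  | succ n ih =>
    refine ⟨ih.2, ?_⟩
    rw [hCrec (n + 1) (by omega), map_sub, map_mul, map_mul, map_sub, Polynomial.aeval_X,
      Polynomial.aeval_C, Polynomial.aeval_C, LinearMap.sub_apply, Module.End.mul_apply,
      Module.End.mul_apply, ih.2, Nat.add_sub_cancel, ih.1,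
      LinearMap.sub_apply, Module.algebraMap_end_apply, Module.algebraMap_end_apply,
      map_smul, hPn n]
    rw [← hr2]
    match_scalars <;> ring
end

section
/- With P and C_n as above, the polynomials C_n are orthogonal with respect to the vacuum functional: for m ≠ n, the vacuum expectation φ(C_n(P) C_m(P)) = (C_n(P) C_m(P) Ω | Ω)_s = 0. -/
noncomputable def ip (s : ℝ) (v w : ℕ →₀ ℝ) : ℝ :=
  ∑ m ∈ v.support ∪ w.support, s ^ (m * (m - 1) / 2) * v m * w m

lemma ip_eq_right (s : ℝ) (v w : ℕ →₀ ℝ) :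
    ip s v w = ∑ j ∈ w.support, s ^ (j * (j - 1) / 2) * v j * w j := by
  unfold ip
  refine (Finset.sum_subset Finset.subset_union_right ?_).symm
  intro x _ hx
  have : w x = 0 := Finsupp.notMem_support_iff.mp hx
  simp [this]

lemma ip_eq_left (s : ℝ) (v w : ℕ →₀ ℝ) :
    ip s v w = ∑ j ∈ v.support, s ^ (j * (j - 1) / 2) * v j * w j := by
  unfold ip
  refine (Finset.sum_subset Finset.subset_union_left ?_).symm
  intro x _ hx
  have : v x = 0 := Finsupp.notMem_support_iff.mp hx
  simp [this]

lemma ip_add_left (s : ℝ) (v₁ v₂ w : ℕ →₀ ℝ) :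
    ip s (v₁ + v₂) w = ip s v₁ w + ip s v₂ w := by
  simp_rw [ip_eq_right, Finsupp.add_apply]
  rw [← Finset.sum_add_distrib]
  exact Finset.sum_congr rfl fun x _ => by ring

lemma ip_add_right (s : ℝ) (v w₁ w₂ : ℕ →₀ ℝ) :
    ip s v (w₁ + w₂) = ip s v w₁ + ip s v w₂ := by
  simp_rw [ip_eq_left, Finsupp.add_apply]
  rw [← Finset.sum_add_distrib]
  exact Finset.sum_congr rfl fun x _ => by ring

lemma ip_smul_left (s c : ℝ) (v w : ℕ →₀ ℝ) :
    ip s (c • v) w = c * ip s v w := by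
  simp_rw [ip_eq_right, Finsupp.smul_apply, Finset.mul_sum, smul_eq_mul]
  exact Finset.sum_congr rfl fun x _ => by ring

lemma ip_smul_right (s c : ℝ) (v w : ℕ →₀ ℝ) :
    ip s v (c • w) = c * ip s v w := by
  simp_rw [ip_eq_left, Finsupp.smul_apply, Finset.mul_sum, smul_eq_mul]
  exact Finset.sum_congr rfl fun x _ => by ring

lemma ip_zero_left (s : ℝ) (w : ℕ →₀ ℝ) : ip s 0 w = 0 := by
  simp [ip_eq_left]

lemma ip_zero_right (s : ℝ) (v : ℕ →₀ ℝ) : ip s v 0 = 0 := by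
  simp [ip_eq_right]

lemma ip_basis (s : ℝ) (i j : ℕ) :
    ip s (e i) (e j) = if i = j then s ^ (i * (i - 1) / 2) else 0 := by
  rw [ip_eq_right]
  unfold e
  rw [Finsupp.support_single_ne_zero _ one_ne_zero]
  by_cases h : i = j
  · subst h; simp
  · simp [Finsupp.single_apply, h]

lemma tri (i : ℕ) : (i + 1) * i / 2 = i * (i - 1) / 2 + i := by
  have h1 := Finset.sum_range_id_mul_two (i + 1)
  have h2 := Finset.sum_range_id_mul_two i
  have h3 : ∑ j ∈ Finset.range (i + 1), j = (∑ j ∈ Finset.range i, j) + i :=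
    Finset.sum_range_succ _ _
  simp only [Nat.add_sub_cancel] at h1
  omega

lemma pow_tri (s : ℝ) (i : ℕ) : s ^ ((i + 1) * i / 2) = s ^ i * s ^ (i * (i - 1) / 2) := by
  rw [tri, pow_add]; ring

lemma sym_ext (s : ℝ) (T : Module.End ℝ (ℕ →₀ ℝ))
    (hT : ∀ i j, ip s (T (e i)) (e j) = ip s (e i) (T (e j))) :
    ∀ v w, ip s (T v) w = ip s v (T w) := by
  have hsingle : ∀ (i : ℕ) (b : ℝ) (w : ℕ →₀ ℝ),
      ip s (T (Finsupp.single i b)) w = ip s (Finsupp.single i b) (T w) := by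
    intro i b w
    induction w using Finsupp.induction_linear with
    | zero => simp [ip_zero_left, ip_zero_right]
    | add f g hf hg => simp [map_add, ip_add_left, ip_add_right, hf, hg]
    | single j d =>
      have h1 : Finsupp.single i b = b • e i := by simp [e, Finsupp.smul_single]
      have h2 : Finsupp.single j d = d • e j := by simp [e, Finsupp.smul_single]
      rw [h1, h2, map_smul, map_smul, ip_smul_left, ip_smul_right, ip_smul_left,
        ip_smul_right, hT]
  intro v w
  induction v using Finsupp.induction_linear with
  | zero => simp [ip_zero_left, ip_zero_right]
  | add f g hf hg => simp [map_add, ip_add_left, ip_add_right, hf, hg]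
  | single i b => exact hsingle i b w

theorem stmt5 (lam s t : ℝ) (hlam : 0 < lam)
    (hs : 0 < s) (hs1 : s ≤ 1) (ht : 0 < t) (ht1 : t ≤ 1)
    (a adag k mt : Module.End ℝ (ℕ →₀ ℝ))
    (ha0 : a (e 0) = 0)
    (ha : ∀ m : ℕ, 1 ≤ m → a (e m) = s ^ (m - 1) • e (m - 1))
    (hadag : ∀ m : ℕ, adag (e m) = e (m + 1))
    (hk : ∀ m : ℕ, k (e m) = s ^ m • e m)
    (hmt0 : mt (e 0) = 0)
    (hmt : ∀ m : ℕ, 1 ≤ m → mt (e m) = t ^ (m - 1) • e m)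
    (C : ℕ → Polynomial ℝ)
    (hC0 : C 0 = 1)
    (hC1 : C 1 = Polynomial.X - Polynomial.C lam)
    (hCrec : ∀ n : ℕ, 1 ≤ n →
      C (n + 1) = (Polynomial.X - Polynomial.C (lam * s ^ n + t ^ (n - 1))) * C n
        - Polynomial.C (lam * s ^ (n - 1)) * C (n - 1)) :
    ∀ m n : ℕ, m ≠ n →
      ip s ((Polynomial.aeval (mt + Real.sqrt lam • (adag + a) + lam • k) (C n) *
             Polynomial.aeval (mt + Real.sqrt lam • (adag + a) + lam • k) (C m)) (e 0))
        (e 0) = 0 := by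
  intro m n hmn
  set sl := Real.sqrt lam with hsl_def
  have hsl2 : sl * sl = lam := Real.mul_self_sqrt hlam.le
  set P : Module.End ℝ (ℕ →₀ ℝ) := mt + sl • (adag + a) + lam • k with hPdef
  -- symmetry of mt on basis
  have hsym_mt : ∀ i j, ip s (mt (e i)) (e j) = ip s (e i) (mt (e j)) := by
    intro i j
    rcases Nat.eq_zero_or_pos i with hi | hi <;> rcases Nat.eq_zero_or_pos j with hj | hj
    · subst hi; subst hj; rw [hmt0, ip_zero_left, ip_zero_right]
    · subst hi
      rw [hmt0, hmt j hj, ip_zero_left, ip_smul_right, ip_basis]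
      have : (0 : ℕ) ≠ j := by omega
      simp [this]
    · subst hj
      rw [hmt0, hmt i hi, ip_zero_right, ip_smul_left, ip_basis]
      have : i ≠ 0 := by omega
      simp [this]
    · rw [hmt i hi, hmt j hj, ip_smul_left, ip_smul_right, ip_basis]
      by_cases hij : i = j
      · subst hij; ring
      · simp [hij]
  have hsym_k : ∀ i j, ip s (k (e i)) (e j) = ip s (e i) (k (e j)) := by
    intro i j
    rw [hk i, hk j, ip_smul_left, ip_smul_right, ip_basis]
    by_cases hij : i = j
    · subst hij; ring
    · simp [hij]
  have hsym_ad : ∀ i j, ip s ((adag + a) (e i)) (e j) = ip s (e i) ((adag + a) (e j)) := by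
    intro i j
    rw [LinearMap.add_apply, LinearMap.add_apply, ip_add_left, ip_add_right, hadag, hadag]
    rcases Nat.eq_zero_or_pos i with hi | hi <;> rcases Nat.eq_zero_or_pos j with hj | hj
    · subst hi; subst hj
      rw [ha0, ip_zero_left, ip_zero_right, ip_basis, ip_basis]
      norm_num
    · subst hi
      rw [ha0, ha j hj, ip_zero_left, ip_smul_right, ip_basis, ip_basis, ip_basis]
      by_cases h1 : j = 1
      · subst h1; norm_num
      · have e1 : (1 : ℕ) ≠ j := by omega
        have e2 : (0 : ℕ) ≠ j + 1 := by omega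
        have e3 : (0 : ℕ) ≠ j - 1 := by omega
        simp [e1, e2, e3]
    · subst hj
      rw [ha0, ha i hi, ip_zero_right, ip_smul_left, ip_basis, ip_basis, ip_basis]
      by_cases h1 : i = 1
      · subst h1; norm_num
      · have e1 : i + 1 ≠ 0 := by omega
        have e2 : i ≠ 1 := by omega
        have e3 : i - 1 ≠ 0 := by omega
        simp [e1, e2, e3]
    · rw [ha i hi, ha j hj, ip_smul_left, ip_smul_right, ip_basis, ip_basis, ip_basis,
        ip_basis]
      by_cases h1 : j = i + 1
      · subst h1
        have e1 : i - 1 ≠ i + 1 := by omega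
        have e2 : i ≠ i + 1 + 1 := by omega
        simp only [Nat.add_sub_cancel, if_neg e1, if_neg e2, if_pos rfl, mul_zero,
          add_zero, zero_add]
        rw [pow_tri]
        simp
      · by_cases h2 : i = j + 1
        · subst h2
          have e1 : j + 1 + 1 ≠ j := by omega
          have e2 : j + 1 - 1 ≠ j + 1 := by omega
          simp only [Nat.add_sub_cancel, if_neg e1, if_neg e2, if_pos rfl, mul_zero,
            add_zero, zero_add]
          rw [pow_tri]
          have e3 : ¬ (j + 1 = j - 1) := by omega
          have e4 : ¬ (1 + j = j - 1) := by omega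
          simp [e3, e4]
        · have e1 : i + 1 ≠ j := by omega
          have e2 : i - 1 ≠ j := by omega
          have e3 : i ≠ j + 1 := by omega
          have e4 : i ≠ j - 1 := by omega
          simp [e1, e2, e3, e4]
  have hsymP : ∀ v w, ip s (P v) w = ip s v (P w) := by
    apply sym_ext
    intro i j
    have had := hsym_ad i j
    rw [LinearMap.add_apply, LinearMap.add_apply, ip_add_left, ip_add_right] at had
    simp only [hPdef, LinearMap.add_apply, LinearMap.smul_apply, ip_add_left, ip_add_right,
      ip_smul_left, ip_smul_right, hsym_mt i j, hsym_k i j]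
    linear_combination sl * had
  have hpow : ∀ (q : ℕ) (v w : ℕ →₀ ℝ), ip s ((P ^ q) v) w = ip s v ((P ^ q) w) := by
    intro q
    induction q with
    | zero => intro v w; simp
    | succ q ih =>
      intro v w
      have hc : P ((P ^ q) w) = (P ^ q) (P w) := by
        rw [← Module.End.mul_apply, ← Module.End.mul_apply, ← pow_succ', ← pow_succ]
      rw [pow_succ, Module.End.mul_apply, Module.End.mul_apply, ih, hsymP, hc]
  have hpoly : ∀ (p : Polynomial ℝ) (v w : ℕ →₀ ℝ),
      ip s ((Polynomial.aeval P p) v) w = ip s v ((Polynomial.aeval P p) w) := by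
    intro p
    induction p using Polynomial.induction_on' with
    | add p q hp hq =>
      intro v w
      simp only [map_add, LinearMap.add_apply, ip_add_left, ip_add_right, hp, hq]
    | monomial q c =>
      intro v w
      rw [Polynomial.aeval_monomial]
      simp only [Module.End.mul_apply, Module.algebraMap_end_apply, ip_smul_left,
        ip_smul_right, map_smul]
      rw [hpow]
  have key : ∀ q : ℕ, (Polynomial.aeval P (C q)) (e 0) = sl ^ q • e q := by
    intro q
    induction q using Nat.twoStepInduction with
    | zero => simp [hC0]
    | one =>
      rw [hC1, map_sub, Polynomial.aeval_X, Polynomial.aeval_C, LinearMap.sub_apply,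
        Module.algebraMap_end_apply]
      have hP0 : P (e 0) = sl • e 1 + lam • e 0 := by
        simp only [hPdef, LinearMap.add_apply, LinearMap.smul_apply, hmt0, ha0, hadag 0,
          hk 0, pow_zero, one_smul]
        module
      rw [hP0]
      module
    | more q ih1 ih2 =>
      have hrec := hCrec (q + 1) (by omega)
      simp only [Nat.add_sub_cancel] at hrec
      show (Polynomial.aeval P (C (q + 1 + 1))) (e 0) = sl ^ (q + 2) • e (q + 2)
      rw [hrec, map_sub, map_mul, map_sub, Polynomial.aeval_X, Polynomial.aeval_C,
        map_mul, Polynomial.aeval_C]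
      simp only [LinearMap.sub_apply, Module.End.mul_apply, Module.algebraMap_end_apply]
      rw [ih2, ih1, map_smul]
      have hPe : P (e (q + 1)) = t ^ q • e (q + 1) + sl • (e (q + 2) + s ^ q • e q)
          + lam • (s ^ (q + 1) • e (q + 1)) := by
        simp only [hPdef, LinearMap.add_apply, LinearMap.smul_apply,
          hmt (q + 1) (by omega), hadag (q + 1), ha (q + 1) (by omega), hk (q + 1),
          Nat.add_sub_cancel]
      rw [hPe]
      simp only [← hsl2]
      module
  rw [Module.End.mul_apply, key m, hpoly, key n, ip_smul_left, ip_smul_right, ip_basis]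
  simp [hmn]
end

section
/- For a block B of a non-crossing partition π of [n] with |B| ≥ 3 and any intermediate element i ∈ B (i.e., min B < i < max B), the depth of i equals the depth of max B: dp(i) = dp(ℓ_B). -/
open scoped Classical

/-- `π` is a partition of `[n] = {1, …, n}`: nonempty pairwise disjoint blocks
whose union is `{1, …, n}`. -/
def IsPartitionOf (n : ℕ) (π : Finset (Finset ℕ)) : Prop :=
  (∀ B ∈ π, B.Nonempty) ∧
  (∀ B ∈ π, ∀ C ∈ π, B ≠ C → Disjoint B C) ∧
  (∀ a : ℕ, a ∈ Finset.Icc 1 n ↔ ∃ B ∈ π, a ∈ B)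

/-- `π` is non-crossing: there are no blocks `B ≠ C` and `b₁ < c₁ < b₂ < c₂`
with `b₁, b₂ ∈ B` and `c₁, c₂ ∈ C`. -/
def NonCrossing (π : Finset (Finset ℕ)) : Prop :=
  ¬ ∃ B ∈ π, ∃ C ∈ π, B ≠ C ∧ ∃ b₁ ∈ B, ∃ c₁ ∈ C, ∃ b₂ ∈ B, ∃ c₂ ∈ C,
      b₁ < c₁ ∧ c₁ < b₂ ∧ b₂ < c₂

/-- `dp π a` is the number of blocks `C` of `π` that cover `a`, i.e. with
`a ∉ C` and `min C < a < max C`. -/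
noncomputable def dp (π : Finset (Finset ℕ)) (a : ℕ) : ℕ :=
  (π.filter fun C => a ∉ C ∧ (∃ x ∈ C, x < a) ∧ (∃ y ∈ C, a < y)).card

theorem stmt7 (n : ℕ) (π : Finset (Finset ℕ))
    (hpart : IsPartitionOf n π) (hnc : NonCrossing π)
    (B : Finset ℕ) (hB : B ∈ π) (hne : B.Nonempty) (hcard : 3 ≤ B.card)
    (i : ℕ) (hi : i ∈ B) (hi1 : B.min' hne < i) (hi2 : i < B.max' hne) :
    dp π i = dp π (B.max' hne) := by
  classical
  set ℓ := B.max' hne with hℓ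
  have hℓB : ℓ ∈ B := B.max'_mem hne
  have hm : B.min' hne ∈ B := B.min'_mem hne
  unfold dp
  congr 1
  apply Finset.filter_congr
  intro C hC

  by_cases hCB : C = B
  · subst hCB
    constructor
    · rintro ⟨h, -, -⟩; exact absurd hi h
    · rintro ⟨h, -, -⟩; exact absurd hℓB h
  · have hdisj := hpart.2.1 C hC B hB hCB
    have hiC : i ∉ C := fun h => (Finset.disjoint_left.mp hdisj h) hi
    have hℓC : ℓ ∉ C := fun h => (Finset.disjoint_left.mp hdisj h) hℓB
    constructor
    · rintro ⟨-, ⟨x, hxC, hxi⟩, ⟨y, hyC, hiy⟩⟩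
      have hyℓ : ℓ < y := by
        rcases lt_trichotomy y ℓ with h | h | h
        · exact absurd ⟨C, hC, B, hB, hCB, x, hxC, i, hi, y, hyC, ℓ, hℓB,
            hxi, hiy, h⟩ hnc
        · exact absurd (h ▸ hyC) hℓC
        · exact h
      exact ⟨hℓC, ⟨x, hxC, hxi.trans hi2⟩, ⟨y, hyC, hyℓ⟩⟩
    · rintro ⟨-, ⟨x, hxC, hxℓ⟩, ⟨y, hyC, hℓy⟩⟩
      have hxi : x < i := by
        rcases lt_trichotomy x i with h | h | h
        · exact h
        · exact absurd (h ▸ hxC) hiC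
        · exact absurd ⟨B, hB, C, hC, Ne.symm hCB, i, hi, x, hxC, ℓ, hℓB, y, hyC,
            h, hxℓ, hℓy⟩ hnc
      exact ⟨hiC, ⟨x, hxC, hxi⟩, ⟨y, hyC, hi2.trans hℓy⟩⟩
end
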